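/- Let M be a matroid of rank r on a ground set of n elements with Tutte polynomial T(M; x, y) = ∑ b_{i,j} x^i y^j (defined via corank-nullity: T(M; x, y) = ∑_{A ⊆ E} (x−1)^{r(E)−r(A)}(y−1)^{|A|−r(A)}). Then ∑_{i=0}^{n} ∑_{j=0}^{n−i} (−1)^j C(n−i, j) b_{i,j} = (−1)^{n−r}. -/

import Mathlib

open Finset

variable {α : Type*} [DecidableEq α]

section aux
open Polynomial PowerSeries

def bc (a i : ℕ) : ℤ := (-1)^(a-i) * a.choose i

lemma bc_eq_zero {a i : ℕ} (h : a < i) : bc a i = 0 := by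
  simp [bc, Nat.choose_eq_zero_of_lt h]

-- inner j-sum
lemma jsum (b m : ℕ) (hbm : b ≤ m) :
    ∑ j ∈ Finset.range (m+1), (-1:ℤ)^j * (m.choose j) * bc b j
      = (-1)^b * ((m+b).choose b) := by
  have hsub : Finset.range (b+1) ⊆ Finset.range (m+1) := by
    intro x hx; simp only [Finset.mem_range] at *; omega
  rw [← Finset.sum_subset hsub (by
    intro x _ hx
    simp only [Finset.mem_range, not_lt] at hx
    rw [bc_eq_zero (by omega), mul_zero])]
  have : ∀ j ∈ Finset.range (b+1),
      (-1:ℤ)^j * (m.choose j) * bc b j = (-1)^b * ((m.choose j) * (b.choose j)) := by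
    intro j hj
    simp only [Finset.mem_range] at hj
    have hj' : j ≤ b := by omega
    rw [bc]
    have : (-1:ℤ)^j * (-1)^(b-j) = (-1)^b := by
      rw [← pow_add]; congr 1; omega
    ring_nf
    rw [mul_assoc, this]
  rw [Finset.sum_congr rfl this, ← Finset.mul_sum]
  congr 1
  have := Nat.add_choose_eq m b b
  rw [Finset.Nat.sum_antidiagonal_eq_sum_range_succ (fun i j => m.choose i * b.choose j)] at this
  have h2 : ∀ j ∈ Finset.range (b+1), m.choose j * b.choose (b - j) = m.choose j * b.choose j := by
    intro j hj; simp only [Finset.mem_range] at hj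
    rw [Nat.choose_symm (by omega : j ≤ b)]
  rw [Finset.sum_congr rfl h2] at this
  rw [this]
  push_cast
  ring

lemma gsum (b : ℕ) : ∀ a y : ℕ,
    ∑ k ∈ Finset.range (a+1), (-1:ℤ)^k * (a.choose k) * ((y+b+k).choose b)
      = if a ≤ b then (-1:ℤ)^a * ((y+b).choose (b-a)) else 0 := by
  intro a
  induction a with
  | zero =>
    intro y
    simp
  | succ a ih =>
    intro y
    set g : ℕ → ℤ := fun k => (-1:ℤ)^k * (a.choose k) * ((y+b+k).choose b) with hg
    have key : ∑ k ∈ Finset.range (a+2), (-1:ℤ)^k * ((a+1).choose k) * ((y+b+k).choose b)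
        = (∑ k ∈ Finset.range (a+1), g k) - (∑ k ∈ Finset.range (a+1),
            (-1:ℤ)^k * (a.choose k) * ((y+1+b+k).choose b)) := by
      rw [Finset.sum_range_succ' (fun k => (-1:ℤ)^k * ((a+1).choose k) * ((y+b+k).choose b))]
      have expand : ∀ k, (-1:ℤ)^(k+1) * ((a+1).choose (k+1)) * ((y+b+(k+1)).choose b)
          = g (k+1) - (-1:ℤ)^k * (a.choose k) * ((y+1+b+k).choose b) := by
        intro k
        rw [Nat.choose_succ_succ]
        have h1 : y + b + (k+1) = y + 1 + b + k := by omega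
        rw [h1, hg]
        have h2 : y + b + (k + 1) = y + 1 + b + k := by omega
        simp only [h2]
        push_cast
        ring
      rw [Finset.sum_congr rfl (fun k _ => expand k), Finset.sum_sub_distrib]
      have h3 : ∑ k ∈ Finset.range (a+1), g (k+1)
          = (∑ k ∈ Finset.range (a+1), g k) + g (a+1) - g 0 := by
        have := Finset.sum_range_succ' g (a+1)
        rw [Finset.sum_range_succ g (a+1)] at this
        linarith [this]
      have hga1 : g (a+1) = 0 := by
        simp [hg, Nat.choose_succ_self]
      have hg0 : g 0 = (-1:ℤ)^0 * ((a+1).choose 0) * ((y+b+0).choose b) := by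
        simp [hg]
      rw [h3, hga1, ← hg0]
      ring
    rw [key, ih y, ih (y+1)]
    by_cases hab : a + 1 ≤ b
    · rw [if_pos (by omega), if_pos (by omega), if_pos hab]
      have hP : (y+1+b).choose (b-a) = (y+b).choose (b-a) + (y+b).choose (b-a-1) := by
        obtain ⟨c, hc⟩ : ∃ c, b - a = c + 1 := ⟨b-a-1, by omega⟩
        have hc2 : b - a - 1 = c := by omega
        rw [hc, Nat.add_sub_cancel, show y+1+b = (y+b)+1 from by omega, Nat.choose_succ_succ]
        simp only [Nat.succ_eq_add_one]
        omega
      have hba : b - (a+1) = b - a - 1 := by omega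
      rw [hP, hba]
      push_cast
      ring
    · rw [if_neg hab]
      by_cases hab2 : a ≤ b
      · have : a = b := by omega
        subst this
        rw [if_pos le_rfl, if_pos le_rfl]
        simp
      · rw [if_neg hab2, if_neg hab2]
        ring

lemma Vsum (a b n : ℕ) (h : a + b ≤ n) :
    ∑ i ∈ Finset.range (n+1), ∑ j ∈ Finset.range (n - i + 1),
        (-1:ℤ)^j * ((n-i).choose j) * (bc a i * bc b j)
      = if a ≤ b then (-1:ℤ)^(a+b) * ((n - a + b).choose (b - a)) else 0 := by
  have step1 : ∀ i ∈ Finset.range (n+1),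
      ∑ j ∈ Finset.range (n - i + 1), (-1:ℤ)^j * ((n-i).choose j) * (bc a i * bc b j)
        = bc a i * ((-1)^b * ((n - i + b).choose b)) := by
    intro i _
    by_cases hia : i ≤ a
    · have hbm : b ≤ n - i := by omega
      rw [← jsum b (n-i) hbm, Finset.mul_sum]
      exact Finset.sum_congr rfl (fun j _ => by ring)
    · rw [bc_eq_zero (by omega)]
      simp
  rw [Finset.sum_congr rfl step1]
  have hsub : Finset.range (a+1) ⊆ Finset.range (n+1) := by
    intro x hx; simp only [Finset.mem_range] at *; omega
  rw [← Finset.sum_subset hsub (by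
    intro x _ hx
    simp only [Finset.mem_range, not_lt] at hx
    rw [bc_eq_zero (by omega), zero_mul])]
  rw [← Finset.sum_range_reflect]
  have step2 : ∀ k ∈ Finset.range (a+1),
      bc a (a + 1 - 1 - k) * ((-1:ℤ)^b * ((n - (a + 1 - 1 - k) + b).choose b))
        = (-1)^b * ((-1:ℤ)^k * (a.choose k) * (((n-a)+b+k).choose b)) := by
    intro k hk
    simp only [Finset.mem_range] at hk
    have h1 : a + 1 - 1 - k = a - k := by omega
    have h2 : n - (a - k) + b = (n - a) + b + k := by omega
    rw [h1, h2, bc]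
    have h3 : a - (a - k) = k := by omega
    rw [h3, Nat.choose_symm (by omega : k ≤ a)]
    ring
  rw [Finset.sum_congr rfl step2, ← Finset.mul_sum, gsum b a (n-a)]
  by_cases hab : a ≤ b
  · rw [if_pos hab, if_pos hab]
    rw [← mul_assoc, ← pow_add, add_comm b a]
  · rw [if_neg hab, if_neg hab, mul_zero]
/-- coefficient of (X-1)^a -/


lemma coeff_X_sub_one_pow (a i : ℕ) :
    ((Polynomial.X - 1 : Polynomial ℤ) ^ a).coeff i = bc a i := by
  have h : (Polynomial.X - 1 : Polynomial ℤ) = Polynomial.X + Polynomial.C (-1) := by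
    simp [sub_eq_add_neg]
  rw [h, Polynomial.coeff_X_add_C_pow, bc]

lemma coeff_X_sub_one_pow' (a i : ℕ) :
    ((Polynomial.X - 1 : Polynomial (Polynomial ℤ)) ^ a).coeff i = Polynomial.C (bc a i) := by
  have h : (Polynomial.X - 1 : Polynomial (Polynomial ℤ))
      = Polynomial.X + Polynomial.C (Polynomial.C (-1)) := by simp [sub_eq_add_neg]
  rw [h, Polynomial.coeff_X_add_C_pow, bc]
  rw [← map_pow, ← Polynomial.C_eq_natCast, ← map_mul, mul_comm]
noncomputable def Qs : PowerSeries ℤ := PowerSeries.mk (fun m => (-1:ℤ)^m)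

lemma PQ : (1 + PowerSeries.X : PowerSeries ℤ) * Qs = 1 := by
  ext n
  cases n with
  | zero => simp [Qs]
  | succ n =>
    rw [add_mul, one_mul, map_add, PowerSeries.coeff_succ_X_mul]
    simp [Qs, pow_succ]

lemma Qpow : ∀ t : ℕ, Qs ^ (t+1) = PowerSeries.mk (fun m => (-1:ℤ)^m * ((t+m).choose m)) := by
  intro t
  induction t with
  | zero => ext m; simp [Qs]
  | succ t ih =>
    rw [pow_succ, ih]
    ext m
    rw [PowerSeries.coeff_mul]
    rw [Finset.Nat.sum_antidiagonal_eq_sum_range_succ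
      (fun i j => PowerSeries.coeff (R := ℤ) i (PowerSeries.mk (fun m => (-1:ℤ)^m * ((t+m).choose m))) *
        PowerSeries.coeff (R := ℤ) j Qs)]
    simp only [PowerSeries.coeff_mk, Qs]
    have step : ∀ i ∈ Finset.range (m+1),
        (-1:ℤ)^i * ((t+i).choose i) * (-1)^(m-i) = (-1)^m * ((i+t).choose t) := by
      intro i hi
      simp only [Finset.mem_range] at hi
      have h1 : (-1:ℤ)^i * (-1)^(m-i) = (-1)^m := by
        rw [← pow_add]; congr 1; omega
      have h2 : (t+i).choose i = (i+t).choose t := by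
        rw [add_comm t i]; exact Nat.choose_symm_add
      rw [h2]
      linear_combination (((i+t).choose t : ℕ) : ℤ) * h1
    have : ∀ i ∈ Finset.range (m+1),
        (-1:ℤ)^i * ((t+i).choose i) * (-1)^(m-i) = (-1)^m * ((i+t).choose t) :=
      step
    rw [Finset.sum_congr rfl this, ← Finset.mul_sum]
    have hock : ∑ i ∈ Finset.range (m+1), (((i+t).choose t : ℕ) : ℤ)
        = (((m + t + 1).choose (t+1) : ℕ) : ℤ) := by
      rw [← Nat.cast_sum]
      norm_cast
      exact Nat.sum_range_add_choose m t
    rw [hock]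
    have : (m + t + 1).choose (t + 1) = (t + 1 + m).choose m := by
      rw [show t + 1 + m = m + (t+1) from by omega, Nat.choose_symm_add,
        show m + (t+1) = m + t + 1 from by omega]
    rw [this]
lemma final_id (n ρ : ℕ) (h : ρ ≤ n) :
    ∑ m ∈ Finset.range (n - ρ + 1),
        (n.choose (ρ+m) : ℤ) * ((-1)^m * ((n+m).choose m)) = (-1)^(n-ρ) := by
  set N := n - ρ with hN
  have h3 : Qs ^ (n+1) * (1 + PowerSeries.X)^n = Qs := by
    have h1 : ((1+PowerSeries.X) * Qs)^n = 1 := by rw [PQ, one_pow]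
    calc Qs^(n+1) * (1+PowerSeries.X)^n = ((1+PowerSeries.X)*Qs)^n * Qs := by
          rw [mul_pow, pow_succ]; ring
    _ = Qs := by rw [h1, one_mul]
  have hcoeff : ∀ j, PowerSeries.coeff (R := ℤ) j ((1 + PowerSeries.X)^n) = (n.choose j : ℤ) := by
    intro j
    have hc : (1 + PowerSeries.X : PowerSeries ℤ) = ((Polynomial.X + 1 : Polynomial ℤ) :
        PowerSeries ℤ) := by
      rw [Polynomial.coe_add, Polynomial.coe_one, Polynomial.coe_X, add_comm]
    rw [hc, ← Polynomial.coe_pow, Polynomial.coeff_coe, Polynomial.coeff_X_add_one_pow]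
  have key := congrArg (PowerSeries.coeff (R := ℤ) N) h3
  rw [PowerSeries.coeff_mul, Qpow n] at key
  rw [Finset.Nat.sum_antidiagonal_eq_sum_range_succ
    (fun i j => PowerSeries.coeff (R := ℤ) i (PowerSeries.mk (fun m => (-1:ℤ)^m * ((n+m).choose m))) *
      PowerSeries.coeff (R := ℤ) j ((1 + PowerSeries.X)^n))] at key
  simp only [PowerSeries.coeff_mk, hcoeff, Qs] at key
  rw [← key]
  apply Finset.sum_congr rfl
  intro m hm
  simp only [Finset.mem_range] at hm
  have hsym : n.choose (N - m) = n.choose (ρ + m) := by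
    rw [show N - m = n - (ρ + m) from by omega, Nat.choose_symm (by omega)]
  rw [hsym]
  ring
end aux
section aux2


lemma rank_bounds (S : Finset α) (r : Finset α → ℤ)
    (hunit : ∀ A ⊆ S, ∀ p ∈ S, r A ≤ r (insert p A) ∧ r (insert p A) ≤ r A + 1) :
    ∀ k : ℕ, ∀ B ⊆ S, ∀ A ⊆ B, (B \ A).card = k → r A ≤ r B ∧ r B ≤ r A + k := by
  intro k
  induction k with
  | zero =>
    intro B hB A hA hcard
    have h1 : B \ A = ∅ := Finset.card_eq_zero.mp hcard
    have hBA : B ⊆ A := by rwa [Finset.sdiff_eq_empty_iff_subset] at h1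
    have : A = B := Finset.Subset.antisymm hA hBA
    subst this; simp
  | succ k ih =>
    intro B hB A hA hcard
    have hne : (B \ A).Nonempty := by rw [← Finset.card_pos, hcard]; omega
    obtain ⟨p, hp⟩ := hne
    have hpB : p ∈ B := (Finset.mem_sdiff.mp hp).1
    have hA' : insert p A ⊆ B := Finset.insert_subset hpB hA
    have hcard' : (B \ insert p A).card = k := by
      rw [Finset.sdiff_insert, Finset.card_erase_of_mem hp, hcard]; rfl
    have h1 := hunit A (hA.trans hB) p (hB hpB)
    have h2 := ih B hB (insert p A) hA' hcard'
    refine ⟨le_trans h1.1 h2.1, ?_⟩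
    push_cast
    linarith [h1.2, h2.2]
end aux2
lemma neg_one_pow_parity {p q t : ℕ} (h : p + 2*t = q) : (-1:ℤ)^q = (-1)^p := by
  rw [← h, pow_add, pow_mul]
  simp

section mainpart
open Polynomial

/-- The Tutte polynomial of a matroid (S, r) via corank-nullity, as a
polynomial in x over polynomials in y; the coefficient b_{i,j} of x^i y^j is
((tutte S r).coeff i).coeff j. -/
noncomputable def tutte (S : Finset α) (r : Finset α → ℤ) : Polynomial (Polynomial ℤ) :=
  ∑ A ∈ S.powerset, (Polynomial.X - 1) ^ (r S - r A).toNat *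
    (Polynomial.C Polynomial.X - 1) ^ ((A.card : ℤ) - r A).toNat

lemma tutte_coeff (S : Finset α) (r : Finset α → ℤ) (i j : ℕ) :
    ((tutte S r).coeff i).coeff j =
      ∑ A ∈ S.powerset, bc ((r S - r A).toNat) i * bc (((A.card : ℤ) - r A).toNat) j := by
  unfold tutte
  rw [Polynomial.finset_sum_coeff]
  rw [Polynomial.finset_sum_coeff]
  apply Finset.sum_congr rfl
  intro A _
  have hC : (Polynomial.C Polynomial.X - 1 : Polynomial (Polynomial ℤ))
      = Polynomial.C (Polynomial.X - 1 : Polynomial ℤ) := by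
    rw [map_sub, map_one]
  rw [hC, ← map_pow, Polynomial.coeff_mul_C, coeff_X_sub_one_pow',
    Polynomial.coeff_C_mul, coeff_X_sub_one_pow]

/-- For a matroid M of rank r on n points (rank axioms: normalization, unit
rank increase, semimodularity, nonnegativity):
∑_{i=0}^{n} ∑_{j=0}^{n-i} (-1)^j C(n-i,j) b_{i,j} = (-1)^{n-r}. -/
theorem stmt14 (S : Finset α) (r : Finset α → ℤ)
    (hnonneg : ∀ A, 0 ≤ r A)
    (h0 : r ∅ = 0)
    (hunit : ∀ A ⊆ S, ∀ p ∈ S, r A ≤ r (insert p A) ∧ r (insert p A) ≤ r A + 1)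
    (hsubmod : ∀ A ⊆ S, ∀ B ⊆ S, r (A ∩ B) + r (A ∪ B) ≤ r A + r B) :
    ∑ i ∈ Finset.range (S.card + 1), ∑ j ∈ Finset.range (S.card - i + 1),
      (-1 : ℤ) ^ j * ((S.card - i).choose j : ℤ) * (((tutte S r).coeff i).coeff j) =
      (-1 : ℤ) ^ (((S.card : ℤ) - r S).toNat) := by
  classical
  set n := S.card with hn
  set ρ := (r S).toNat with hρdef
  -- rank facts
  have hfacts : ∀ A ∈ S.powerset,
      r A ≤ r S ∧ r S ≤ r A + ((n : ℤ) - A.card) ∧ 0 ≤ r A ∧ r A ≤ A.card := by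
    intro A hA
    rw [Finset.mem_powerset] at hA
    have hcardS : (S \ A).card = n - A.card := by
      rw [Finset.card_sdiff_of_subset hA]
    have h1 := rank_bounds S r hunit ((S \ A).card) S (le_refl S) A hA rfl
    have h2 := rank_bounds S r hunit ((A \ ∅).card) A hA ∅ (Finset.empty_subset A) rfl
    have hAcard : A.card ≤ n := Finset.card_le_card hA
    have hAd : (A \ ∅).card = A.card := by rw [Finset.sdiff_empty]
    refine ⟨h1.1, ?_, hnonneg A, ?_⟩
    · have := h1.2
      rw [hcardS] at this
      push_cast [Nat.cast_sub hAcard] at this ⊢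
      linarith
    · have := h2.2
      rw [hAd, h0] at this
      linarith
  have hρn : ρ ≤ n := by
    have := (hfacts ∅ (by simp)).2.1
    rw [h0] at this
    simp only [Finset.card_empty, Nat.cast_zero, sub_zero] at this
    omega
  have hρS : (ρ : ℤ) = r S := Int.toNat_of_nonneg (hnonneg S)
  -- rewrite coefficients and swap sums
  simp only [tutte_coeff, Finset.mul_sum]
  have swap1 : ∀ i, ∑ j ∈ Finset.range (n - i + 1), ∑ A ∈ S.powerset,
      (-1:ℤ)^j * ((n-i).choose j) * (bc ((r S - r A).toNat) i *
        bc (((A.card : ℤ) - r A).toNat) j)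
      = ∑ A ∈ S.powerset, ∑ j ∈ Finset.range (n - i + 1),
      (-1:ℤ)^j * ((n-i).choose j) * (bc ((r S - r A).toNat) i *
        bc (((A.card : ℤ) - r A).toNat) j) := fun i => Finset.sum_comm
  rw [Finset.sum_congr rfl (fun i _ => swap1 i), Finset.sum_comm]
  -- per subset evaluation
  have perA : ∀ A ∈ S.powerset,
      ∑ i ∈ Finset.range (n + 1), ∑ j ∈ Finset.range (n - i + 1),
        (-1:ℤ)^j * ((n-i).choose j) * (bc ((r S - r A).toNat) i *
          bc (((A.card : ℤ) - r A).toNat) j)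
      = (if ρ ≤ A.card then
          (-1:ℤ)^(ρ + A.card) * ((n - ρ + A.card).choose (A.card - ρ)) else 0) := by
    intro A hA
    obtain ⟨hf1, hf2, hf3, hf4⟩ := hfacts A hA
    set a := (r S - r A).toNat with hadef
    set b := ((A.card : ℤ) - r A).toNat with hbdef
    have hAn : A.card ≤ n := Finset.card_le_card (Finset.mem_powerset.mp hA)
    have haZ : (a : ℤ) = r S - r A := Int.toNat_of_nonneg (by linarith)
    have hbZ : (b : ℤ) = (A.card : ℤ) - r A := Int.toNat_of_nonneg (by linarith)
    have habn : a + b ≤ n := by omega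
    rw [Vsum a b n habn]
    by_cases hcase : ρ ≤ A.card
    · rw [if_pos (by omega : a ≤ b), if_pos hcase]
      have e1 : b - a = A.card - ρ := by omega
      have e2 : n - a + b = n - ρ + A.card := by omega
      have e3 : a + b + 2 * (r A).toNat = ρ + A.card := by omega
      rw [e1, e2, neg_one_pow_parity e3]
    · rw [if_neg (by omega : ¬ a ≤ b), if_neg hcase]
  rw [Finset.sum_congr rfl perA]
  -- sum over powerset as sum over cardinalities
  rw [Finset.sum_powerset_apply_card (fun k => if ρ ≤ k then
      (-1:ℤ)^(ρ + k) * ((n - ρ + k).choose (k - ρ)) else 0)]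
  simp only [nsmul_eq_mul]
  -- restrict to k ≥ ρ and reindex
  have hIco : Finset.Ico ρ (n+1) ⊆ Finset.range (n+1) := by
    intro x hx
    simp only [Finset.mem_Ico, Finset.mem_range] at *
    omega
  rw [← Finset.sum_subset hIco (by
    intro x _ hx
    simp only [Finset.mem_Ico, Finset.mem_range, not_and, not_le, not_lt] at hx
    have : ¬ ρ ≤ x := by
      by_contra hc
      have := hx hc
      simp only [Finset.mem_range] at *
      omega
    rw [if_neg this, mul_zero])]
  rw [Finset.sum_Ico_eq_sum_range]
  have hper : ∀ m ∈ Finset.range (n + 1 - ρ),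
      ((n.choose (ρ + m) : ℕ) : ℤ) * (if ρ ≤ ρ + m then
        (-1:ℤ)^(ρ + (ρ + m)) * ((n - ρ + (ρ + m)).choose ((ρ + m) - ρ)) else 0)
      = (n.choose (ρ+m) : ℤ) * ((-1)^m * ((n+m).choose m)) := by
    intro m _
    rw [if_pos (by omega)]
    have e1 : n - ρ + (ρ + m) = n + m := by omega
    have e2 : ρ + m - ρ = m := by omega
    have e3 : ρ + (ρ + m) = 2 * ρ + m := by omega
    rw [e1, e2, e3, show ((2*ρ+m) = m + 2*ρ) from by omega, neg_one_pow_parity rfl]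
  rw [Finset.sum_congr rfl hper, show n + 1 - ρ = n - ρ + 1 from by omega,
    final_id n ρ hρn]
  congr 1
  omega
end mainpart
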